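/- arXiv:0902.1330 — 2 statements merged into one kernel-verified Lean document; each statement's English description precedes it below -/
import Mathlib

section
/- For every injective map τ : D → D with inverse σ = τ^{−1} : τ(D) → D and every nonempty collection H ⊆ τ(D), one has ∫₀¹ μ_H(t) dt ≤ |σ(H)*| · ‖S_σ‖_{BMO}²; consequently C₁ ≤ ‖S_σ‖_{BMO}². -/
open MeasureTheory Set
open scoped ENNReal NNReal Classical

noncomputable section

/-- A dyadic subinterval of `[0,1)`: the half-open interval
`[k/2^n, (k+1)/2^n)` with `k < 2^n`. -/
structure DyadicI where
  n : ℕ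
  k : ℕ
  hk : k < 2 ^ n

instance : Nonempty DyadicI := ⟨⟨0, 0, by norm_num⟩⟩

namespace DyadicI

/-- The length `|I| = 2^{-n}` of a dyadic interval. -/
def len (I : DyadicI) : ℝ := (2 : ℝ) ^ (-(I.n : ℤ))

/-- The left endpoint `k 2^{-n}` of a dyadic interval. -/
def lep (I : DyadicI) : ℝ := (I.k : ℝ) * I.len

/-- The underlying point set `[k/2^n, (k+1)/2^n)` of a dyadic interval. -/
def toSet (I : DyadicI) : Set ℝ := Set.Ico I.lep (I.lep + I.len)

/-- The `L^∞`-normalized Haar function `h_I`: `1` on the left half of `I`,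
`-1` on the right half of `I`, `0` off `I`. -/
def haar (I : DyadicI) (t : ℝ) : ℝ :=
  if t ∈ Set.Ico I.lep (I.lep + I.len / 2) then 1
  else if t ∈ Set.Ico (I.lep + I.len / 2) (I.lep + I.len) then -1
  else 0

end DyadicI

open DyadicI

section Defs

variable {X : Type*} [NormedAddCommGroup X] [NormedSpace ℝ X]

/-- The square function `𝕊(f)` of the `X`-valued Haar expansion `f = ∑_{I ∈ s} x_I h_I`:
`𝕊(f)(t) = (E_ε ‖∑_I ε_I x_I h_I(t)‖²)^{1/2}`, the average being taken over all
choices of signs `ε_I ∈ {±1}`, `I ∈ s`. -/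
def sqFn (s : Finset DyadicI) (x : DyadicI → X) (t : ℝ) : ℝ :=
  Real.sqrt ((∑ ε : {I // I ∈ s} → Bool,
    ‖∑ I ∈ s.attach, ((if ε I then (1 : ℝ) else -1) * haar I.1 t) • x I.1‖ ^ 2) /
      2 ^ s.card)

/-- The `H^p_X` (quasi-)norm of `f = ∑_{I ∈ s} x_I h_I`:
`‖f‖ = (∫₀¹ 𝕊(f)(t)^p dt)^{1/p}`. -/
def HpNormV (p : ℝ) (s : Finset DyadicI) (x : DyadicI → X) : ℝ :=
  (∫ t in Set.Icc (0 : ℝ) 1, sqFn s x t ^ p) ^ (1 / p)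

/-- The coefficients of `(T_{τ,p} ⊗ Id_X)(f)` for `f = ∑_{I ∈ s} x_I h_I`, namely
`(T_{τ,p} ⊗ Id_X)(f) = ∑_{I ∈ s} (|I|/|τ(I)|)^{1/p} x_I h_{τ(I)}`, as a family of
coefficients indexed by the Haar support `τ(s)`. -/
def rearrCoef (τ : DyadicI → DyadicI) (p : ℝ) (s : Finset DyadicI) (x : DyadicI → X) :
    DyadicI → X :=
  fun J => ∑ I ∈ s, if τ I = J then ((len I / len (τ I)) ^ (1 / p)) • x I else 0

/-- The scalar dyadic square function `S(f) = (∑_I a_I² 1_I)^{1/2}`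
of `f = ∑_{I ∈ s} a_I h_I`. -/
def sqFnS (s : Finset DyadicI) (a : DyadicI → ℝ) (t : ℝ) : ℝ :=
  Real.sqrt (∑ I ∈ s, a I ^ 2 * Set.indicator (toSet I) (fun _ => (1 : ℝ)) t)

/-- The scalar dyadic `H^p` (quasi-)norm `‖f‖_{H^p} = ‖S(f)‖_{L^p[0,1]}`. -/
def HpNormS (p : ℝ) (s : Finset DyadicI) (a : DyadicI → ℝ) : ℝ :=
  (∫ t in Set.Icc (0 : ℝ) 1, sqFnS s a t ^ p) ^ (1 / p)

/-- The coefficients of the scalar rearrangement operator `T_{τ,p}` applied to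
`f = ∑_{I ∈ s} a_I h_I`; `T_{τ,p}` is determined by
`T_{τ,p}(h_I/|I|^{1/p}) = h_{τ(I)}/|τ(I)|^{1/p}`. -/
def rearrCoefS (τ : DyadicI → DyadicI) (p : ℝ) (s : Finset DyadicI) (a : DyadicI → ℝ) :
    DyadicI → ℝ :=
  fun J => ∑ I ∈ s, if τ I = J then ((len I / len (τ I)) ^ (1 / p)) * a I else 0

/-- The operator norm `‖T_{τ,p} ⊗ Id_X : H^p_X → H^p_X‖ ∈ [0,∞]`, computed as the
supremum over finitely supported `f` in the unit ball of `H^p_X`. -/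
def hpOpNorm (τ : DyadicI → DyadicI) (p : ℝ) (X : Type*) [NormedAddCommGroup X]
    [NormedSpace ℝ X] : ℝ≥0∞ :=
  ⨆ (s : Finset DyadicI) (x : DyadicI → X) (_ : HpNormV p s x ≤ 1),
    ENNReal.ofReal (HpNormV p (s.image τ) (rearrCoef τ p s x))

/-- The scalar operator norm `‖T_{τ,p} : H^p → H^p‖ ∈ [0,∞]`. -/
def hpOpNormS (τ : DyadicI → DyadicI) (p : ℝ) : ℝ≥0∞ :=
  ⨆ (s : Finset DyadicI) (a : DyadicI → ℝ) (_ : HpNormS p s a ≤ 1),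
    ENNReal.ofReal (HpNormS p (s.image τ) (rearrCoefS τ p s a))

/-- For `H = τ(L)` (so that `σ(J) = I` for `J = τ(I)`, `I ∈ L`), the maximal function
`μ_H(t) = sup_{J ∈ H} (|σ(J)|/|J|) 1_J(t) = sup_{I ∈ L} (|I|/|τ(I)|) 1_{τ(I)}(t)`,
as an `[0,∞]`-valued function. -/
def muSet (τ : DyadicI → DyadicI) (L : Set DyadicI) (t : ℝ) : ℝ≥0∞ :=
  ⨆ (I : DyadicI) (_ : I ∈ L),
    ENNReal.ofReal (len I / len (τ I) * Set.indicator (toSet (τ I)) (fun _ => (1 : ℝ)) t)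

/-- For `H = τ(L)` with `L` finite, the (real-valued) maximal function
`μ_H(t) = max_{I ∈ L} (|I|/|τ(I)|) 1_{τ(I)}(t)`. -/
def muFin (τ : DyadicI → DyadicI) (L : Finset DyadicI) (t : ℝ) : ℝ :=
  ((L.sup fun I =>
    Real.toNNReal (len I / len (τ I) * Set.indicator (toSet (τ I)) (fun _ => (1 : ℝ)) t) : ℝ≥0) : ℝ)

/-- The point set `L* = ⋃_{I ∈ L} I` covered by a collection of dyadic intervals. -/
def pointSet (L : Set DyadicI) : Set ℝ := ⋃ I ∈ L, toSet I

/-- The constant `C₁ = sup_{H ⊆ τ(D), H ≠ ∅} (1/|σ(H)*|) ∫₀¹ μ_H(t) dt`, where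
nonempty collections `H ⊆ τ(D)` are parametrized as `H = τ(L)` for nonempty `L ⊆ D`,
so that `σ(H)* = L*`. -/
def Cone (τ : DyadicI → DyadicI) : ℝ≥0∞ :=
  ⨆ (L : Set DyadicI) (_ : L.Nonempty),
    (∫⁻ t in Set.Icc (0 : ℝ) 1, muSet τ L t) / volume (pointSet L)

/-- The square of the dyadic BMO norm of `g = ∑_{J ∈ s} a_J h_J`:
`‖g‖_{BMO}² = sup_{I ∈ D} (1/|I|) ∑_{J ⊆ I} a_J² |J|`. -/
def bmoSq (s : Finset DyadicI) (a : DyadicI → ℝ) : ℝ≥0∞ :=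
  ⨆ I : DyadicI, ENNReal.ofReal
    ((∑ J ∈ s.filter fun J => toSet J ⊆ toSet I, a J ^ 2 * len J) / len I)

/-- The coefficients of `S_σ(g)` for `g = ∑_{J ∈ s} a_J h_J`, where `σ = τ⁻¹` on `τ(D)`:
`S_σ(h_J) = h_{σ(J)}` for `J ∈ τ(D)` and `S_σ(h_J) = 0` otherwise, so that the
coefficient of `h_K` in `S_σ(g)` is `a_{τ(K)}` if `τ(K) ∈ s`, and `0` otherwise. -/
def sSigmaCoef (τ : DyadicI → DyadicI) (s : Finset DyadicI) (a : DyadicI → ℝ) :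
    DyadicI → ℝ :=
  fun K => if τ K ∈ s then a (τ K) else 0

/-- The Haar support of `S_σ(g)` for `g` with Haar support `s`:
`σ(s ∩ τ(D))`, i.e. the preimage under `τ` of `s`. -/
def sSigmaSupp (τ : DyadicI → DyadicI) (s : Finset DyadicI) : Finset DyadicI :=
  (s.filter fun J => J ∈ Set.range τ).image (Function.invFun τ)

/-- The operator norm `‖S_σ‖_{BMO} ∈ [0,∞]` of `S_σ` with respect to the dyadic BMO
norm, computed over finitely supported Haar expansions. -/
def bmoOpNorm (τ : DyadicI → DyadicI) : ℝ≥0∞ :=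
  ⨆ (s : Finset DyadicI) (a : DyadicI → ℝ) (_ : bmoSq s a ≤ 1),
    (bmoSq (sSigmaSupp τ s) (sSigmaCoef τ s a)) ^ (1 / 2 : ℝ)

/-- The Carleson constant `⟦C⟧ = sup_{I ∈ C} (1/|I|) ∑_{J ∈ C, J ⊆ I} |J| ∈ [0,∞]`
of a collection of dyadic intervals. -/
def carleson (C : Set DyadicI) : ℝ≥0∞ :=
  ⨆ (I : DyadicI) (_ : I ∈ C),
    (∑' J : {J : DyadicI // J ∈ C ∧ toSet J ⊆ toSet I}, ENNReal.ofReal (len J.1)) /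
      ENNReal.ofReal (len I)

/-- The `L^p_X = L^p([0,1]; X)` (Bochner) norm of `f = ∑_{I ∈ s} x_I h_I`. -/
def LpNormV (p : ℝ) (s : Finset DyadicI) (x : DyadicI → X) : ℝ :=
  (∫ t in Set.Icc (0 : ℝ) 1, ‖∑ I ∈ s, haar I t • x I‖ ^ p) ^ (1 / p)

/-- The operator norm `‖T_{τ,p} ⊗ Id_X : L^p_X → L^p_X‖ ∈ [0,∞]`, computed over
finitely supported Haar expansions. -/
def lpOpNorm (τ : DyadicI → DyadicI) (p : ℝ) (X : Type*) [NormedAddCommGroup X]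
    [NormedSpace ℝ X] : ℝ≥0∞ :=
  ⨆ (s : Finset DyadicI) (x : DyadicI → X) (_ : LpNormV p s x ≤ 1),
    ENNReal.ofReal (LpNormV p (s.image τ) (rearrCoef τ p s x))

/-- The operator norm `‖T_{τ,p}^{-1} ⊗ Id_X‖ ∈ [0,∞]` on the span of
`{h_J : J ∈ τ(D)}` with the `L^p_X` norm: the map determined by
`x h_{τ(I)}/|τ(I)|^{1/p} ↦ x h_I/|I|^{1/p}`, i.e. sending
`g = ∑_{I ∈ L} x_I h_{τ(I)}` to `∑_{I ∈ L} (|τ(I)|/|I|)^{1/p} x_I h_I`. -/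
def lpInvOpNorm (τ : DyadicI → DyadicI) (p : ℝ) (X : Type*) [NormedAddCommGroup X]
    [NormedSpace ℝ X] : ℝ≥0∞ :=
  ⨆ (L : Finset DyadicI) (x : DyadicI → X)
    (_ : LpNormV p (L.image τ) (fun J => ∑ I ∈ L, if τ I = J then x I else 0) ≤ 1),
    ENNReal.ofReal (LpNormV p L fun I => ((len (τ I) / len I) ^ (1 / p)) • x I)

/-- The operator norm `‖T_{τ,1}^{-1}‖₁ ∈ [0,∞]` on the span of `{h_J : J ∈ τ(D)}`
with the dyadic `H¹` norm: the map determined by `h_{τ(I)}/|τ(I)| ↦ h_I/|I|`,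
i.e. sending `g = ∑_{I ∈ L} a_I h_{τ(I)}` to `∑_{I ∈ L} (|τ(I)|/|I|) a_I h_I`. -/
def h1InvOpNorm (τ : DyadicI → DyadicI) : ℝ≥0∞ :=
  ⨆ (L : Finset DyadicI) (a : DyadicI → ℝ)
    (_ : HpNormS 1 (L.image τ) (fun J => ∑ I ∈ L, if τ I = J then a I else 0) ≤ 1),
    ENNReal.ofReal (HpNormS 1 L fun I => (len (τ I) / len I) * a I)

/-- The Rademacher average `(E_ε ‖∑_{i<n} ε_i a_i‖^p)^{1/p}` over all choices of
signs `ε_i ∈ {±1}`. -/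
def radAvg (p : ℝ) {Y : Type*} [NormedAddCommGroup Y] [NormedSpace ℝ Y] (n : ℕ)
    (a : Fin n → Y) : ℝ :=
  ((∑ ε : Fin n → Bool, ‖∑ i, (if ε i then (1 : ℝ) else -1) • a i‖ ^ p) / 2 ^ n) ^ (1 / p)

/-- The type-`p` constant `Type_p(Y) ∈ [0,∞]`: the least `C` such that
`(E_ε ‖∑ ε_i a_i‖^p)^{1/p} ≤ C (∑ ‖a_i‖^p)^{1/p}` for all finite families in `Y`. -/
def typeConst (p : ℝ) (Y : Type*) [NormedAddCommGroup Y] [NormedSpace ℝ Y] : ℝ≥0∞ :=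
  sInf {C : ℝ≥0∞ | ∀ (n : ℕ) (a : Fin n → Y),
    ENNReal.ofReal (radAvg p n a) ≤ C * ENNReal.ofReal ((∑ i, ‖a i‖ ^ p) ^ (1 / p))}

/-- The UMD property of a Banach space `E`: for each `1 < r < ∞` the Haar system is
unconditional in `L^r_E`. -/
def IsUMD (E : Type*) [NormedAddCommGroup E] [NormedSpace ℝ E] : Prop :=
  ∀ r : ℝ, 1 < r → ∃ β : ℝ, ∀ (s : Finset DyadicI) (x : DyadicI → E) (ε : DyadicI → ℝ),
    (∀ I, ε I = 1 ∨ ε I = -1) →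
    LpNormV r s (fun I => ε I • x I) ≤ β * LpNormV r s x

/-- `B` is a block in `L` with top `I`: `B ⊆ L`, `I` is the unique maximal interval
of `B`, and `B` is order-convex in `L` between its elements and `I`. -/
def IsBlock (L : Set DyadicI) (B : Set DyadicI) (I : DyadicI) : Prop :=
  B ⊆ L ∧ I ∈ B ∧ (∀ J ∈ B, toSet J ⊆ toSet I) ∧
    ∀ J ∈ B, ∀ K ∈ L, toSet J ⊆ toSet K → toSet K ⊆ toSet I → K ∈ B

/-- `G₁(K | E)`: the maximal dyadic intervals of `E` strictly contained in `K`. -/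
def gen1 (K : DyadicI) (E : Set DyadicI) : Set DyadicI :=
  {J | J ∈ E ∧ toSet J ⊂ toSet K ∧
    ∀ J' ∈ E, toSet J' ⊂ toSet K → toSet J ⊆ toSet J' → J' = J}

end Defs


namespace Statement3Aux

open DyadicI

lemma len_pos (I : DyadicI) : 0 < I.len := zpow_pos two_pos _

lemma lt_right (I : DyadicI) : I.lep < I.lep + I.len := lt_add_of_pos_right _ (len_pos I)

lemma volume_toSet (I : DyadicI) : volume (toSet I) = ENNReal.ofReal I.len := by
  rw [DyadicI.toSet, Real.volume_Ico]; ring_nf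

lemma measurableSet_toSet (I : DyadicI) : MeasurableSet (toSet I) := measurableSet_Ico

lemma len_le_len_of_le {I J : DyadicI} (h : J.n ≤ I.n) : I.len ≤ J.len :=
  zpow_le_zpow_right₀ one_le_two (by omega)

lemma len_of_le {I J : DyadicI} (h : J.n ≤ I.n) :
    J.len = (2:ℝ) ^ (I.n - J.n) * I.len := by
  rw [DyadicI.len, DyadicI.len, ← zpow_natCast (2:ℝ) (I.n - J.n),
    ← zpow_add₀ (two_ne_zero)]
  congr 1
  omega

lemma subset_or_disjoint_aux {I J : DyadicI} (h : J.n ≤ I.n) :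
    toSet I ⊆ toSet J ∨ Disjoint (toSet I) (toSet J) := by
  by_cases hd : Disjoint (toSet I) (toSet J)
  · exact Or.inr hd
  left
  rw [Set.not_disjoint_iff] at hd
  obtain ⟨t, ⟨ht1, ht2⟩, ht3, ht4⟩ := hd
  have hIp := len_pos I
  have hkey := len_of_le h
  have hca : J.lep ≤ I.lep := by
    by_contra hac
    push_neg at hac
    have h1 : (I.k : ℝ) * I.len < (J.k : ℝ) * ((2:ℝ) ^ (I.n - J.n) * I.len) := by
      rw [← hkey]; exact hac
    have h2 : (I.k : ℝ) < (J.k * 2 ^ (I.n - J.n) : ℕ) := by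
      push_cast
      nlinarith
    have h3 : I.k + 1 ≤ J.k * 2 ^ (I.n - J.n) := by exact_mod_cast h2
    have h4 : I.lep + I.len ≤ J.lep := by
      rw [DyadicI.lep, DyadicI.lep, hkey]
      have : ((I.k : ℝ) + 1) ≤ (J.k * 2 ^ (I.n - J.n) : ℕ) := by exact_mod_cast h3
      push_cast at this
      nlinarith
    linarith
  have hbd : I.lep + I.len ≤ J.lep + J.len := by
    by_contra hdb
    push_neg at hdb
    have h1 : ((J.k : ℝ) + 1) * ((2:ℝ) ^ (I.n - J.n) * I.len) < ((I.k : ℝ) + 1) * I.len := by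
      have e1 : J.lep + J.len = ((J.k : ℝ) + 1) * ((2:ℝ) ^ (I.n - J.n) * I.len) := by
        rw [DyadicI.lep, hkey]; ring
      have e2 : I.lep + I.len = ((I.k : ℝ) + 1) * I.len := by rw [DyadicI.lep]; ring
      linarith [e1 ▸ e2 ▸ hdb]
    have h2 : (((J.k + 1) * 2 ^ (I.n - J.n) : ℕ) : ℝ) < (I.k : ℝ) + 1 := by
      push_cast
      nlinarith
    have h3 : (J.k + 1) * 2 ^ (I.n - J.n) ≤ I.k := by
      have : ((J.k + 1) * 2 ^ (I.n - J.n) : ℕ) < I.k + 1 := by exact_mod_cast h2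
      omega
    have h4 : J.lep + J.len ≤ I.lep := by
      rw [DyadicI.lep, DyadicI.lep, hkey]
      have : (((J.k + 1) * 2 ^ (I.n - J.n) : ℕ) : ℝ) ≤ (I.k : ℝ) := by exact_mod_cast h3
      push_cast at this
      nlinarith
    linarith
  exact Set.Ico_subset_Ico hca hbd

lemma subset_or_subset_or_disjoint (I J : DyadicI) :
    toSet I ⊆ toSet J ∨ toSet J ⊆ toSet I ∨ Disjoint (toSet I) (toSet J) := by
  rcases le_total J.n I.n with h | h
  · rcases subset_or_disjoint_aux h with h' | h'
    · exact Or.inl h'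
    · exact Or.inr (Or.inr h')
  · rcases subset_or_disjoint_aux h with h' | h'
    · exact Or.inr (Or.inl h')
    · exact Or.inr (Or.inr h'.symm)

lemma toSet_injective : Function.Injective DyadicI.toSet := by
  intro I J hIJ
  rw [DyadicI.toSet, DyadicI.toSet, Set.Ico_eq_Ico_iff (Or.inl (lt_right I))] at hIJ
  obtain ⟨h1, h2⟩ := hIJ
  have hlen : I.len = J.len := by linarith
  have hn : I.n = J.n := by
    have := zpow_right_injective₀ (two_pos (α := ℝ)) (by norm_num : (2:ℝ) ≠ 1) hlen
    omega
  have hk : I.k = J.k := by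
    have : (I.k : ℝ) * J.len = (J.k : ℝ) * J.len := by
      rw [DyadicI.lep, DyadicI.lep, hlen] at h1; exact h1
    have := mul_right_cancel₀ (len_pos J).ne' this
    exact_mod_cast this
  cases I; cases J; simp_all

lemma subset_iff_of_subset {I J : DyadicI} (h : toSet I ⊆ toSet J) :
    J.n ≤ I.n := by
  have h1 := (Set.Ico_subset_Ico_iff (lt_right I)).mp h
  have : I.len ≤ J.len := by
    rw [DyadicI.toSet] at *
    linarith [h1.1, h1.2]
  rw [DyadicI.len, DyadicI.len] at this
  by_contra hc
  push_neg at hc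
  have := zpow_lt_zpow_right₀ (one_lt_two (α := ℝ)) (by omega : -(J.n:ℤ) < -(I.n:ℤ))
  linarith

lemma eq_of_subset_len_le {I J : DyadicI} (h : toSet I ⊆ toSet J) (hl : J.len ≤ I.len) :
    J = I := by
  have h1 := (Set.Ico_subset_Ico_iff (lt_right I)).mp h
  have hIl : I.len ≤ J.len := by linarith [h1.1, h1.2]
  apply toSet_injective
  rw [DyadicI.toSet, DyadicI.toSet, Set.Ico_eq_Ico_iff (Or.inl (lt_right J))]
  constructor
  · linarith [h1.1, h1.2]
  · linarith [h1.1, h1.2]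

instance : Countable DyadicI :=
  Function.Injective.countable (f := fun I : DyadicI => (I.n, I.k))
    (by rintro ⟨n, k, h⟩ ⟨n', k', h'⟩ hIJ; simp_all)

lemma indicator_le_one {S : Set ℝ} {t : ℝ} : S.indicator (1 : ℝ → ℝ≥0∞) t ≤ 1 := by
  by_cases ht : t ∈ S <;> simp [ht]

lemma exists_disjoint_rep (r : DyadicI → ℝ≥0∞) (F : Finset DyadicI)
    (A : DyadicI → Set ℝ) (hA : ∀ i, MeasurableSet (A i)) :
    ∃ E : DyadicI → Set ℝ, (∀ i, MeasurableSet (E i)) ∧ (∀ i, E i ⊆ A i) ∧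
      (∀ i ∈ F, ∀ j ∈ F, i ≠ j → Disjoint (E i) (E j)) ∧
      ∀ t, (⨆ i ∈ F, r i * (A i).indicator 1 t) ≤ ∑ i ∈ F, r i * (E i).indicator 1 t := by
  suffices H : ∀ (n : ℕ) (F : Finset DyadicI), F.card = n →
      ∀ (A : DyadicI → Set ℝ), (∀ i, MeasurableSet (A i)) →
      ∃ E : DyadicI → Set ℝ, (∀ i, MeasurableSet (E i)) ∧ (∀ i, E i ⊆ A i) ∧
      (∀ i ∈ F, ∀ j ∈ F, i ≠ j → Disjoint (E i) (E j)) ∧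
      ∀ t, (⨆ i ∈ F, r i * (A i).indicator 1 t) ≤ ∑ i ∈ F, r i * (E i).indicator 1 t by
    exact H F.card F rfl A hA
  intro n
  induction n with
  | zero =>
    intro F hF A hA
    rw [Finset.card_eq_zero] at hF
    subst hF
    exact ⟨fun _ => ∅, fun _ => MeasurableSet.empty, fun _ => Set.empty_subset _,
      by simp, by simp⟩
  | succ n ih =>
    intro F hF A hA
    have hne : F.Nonempty := by rw [← Finset.card_pos, hF]; omega
    obtain ⟨i₀, hi₀F, hmax⟩ := F.exists_max_image r hne
    have hF' : (F.erase i₀).card = n := by rw [Finset.card_erase_of_mem hi₀F, hF]; omega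
    obtain ⟨E', hE'm, hE'sub, hE'disj, hE'pt⟩ :=
      ih (F.erase i₀) hF' (fun i => A i \ A i₀) (fun i => (hA i).diff (hA i₀))
    refine ⟨fun i => if i = i₀ then A i₀ else E' i, ?_, ?_, ?_, ?_⟩
    · intro i
      by_cases hi : i = i₀ <;> simp [hi, hA i₀, hE'm i]
    · intro i
      by_cases hi : i = i₀
      · subst hi; simp
      · simp only [hi, if_false]
        exact (hE'sub i).trans Set.diff_subset
    · intro i hi j hj hij
      by_cases hii : i = i₀
      · subst hii
        simp only [if_pos rfl, if_neg (Ne.symm hij)]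
        exact (Set.disjoint_sdiff_left.mono_left (hE'sub j)).symm
      · by_cases hjj : j = i₀
        · subst hjj
          simp only [if_neg hii, if_pos rfl]
          exact Set.disjoint_sdiff_left.mono_left (hE'sub i)
        · simp only [if_neg hii, if_neg hjj]
          exact hE'disj i (Finset.mem_erase.mpr ⟨hii, hi⟩) j (Finset.mem_erase.mpr ⟨hjj, hj⟩) hij
    · intro t
      by_cases ht : t ∈ A i₀
      · refine le_trans (iSup₂_le fun i hi => ?_) (Finset.single_le_sum
          (f := fun i => r i * (if i = i₀ then A i₀ else E' i).indicator 1 t)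
          (fun _ _ => zero_le) hi₀F)
        have hfi : r i₀ * (if i₀ = i₀ then A i₀ else E' i₀).indicator 1 t = r i₀ := by
          rw [if_pos rfl, Set.indicator_of_mem ht]; simp
        show r i * (A i).indicator 1 t ≤
          r i₀ * (if i₀ = i₀ then A i₀ else E' i₀).indicator 1 t
        rw [hfi]
        calc r i * (A i).indicator 1 t ≤ r i * 1 :=
              mul_le_mul_right indicator_le_one _
          _ = r i := mul_one _
          _ ≤ r i₀ := hmax i hi
      · refine iSup₂_le fun i hi => ?_
        by_cases hii : i = i₀
        · subst hii
          simp [Set.indicator_of_notMem ht]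
        · have h1 : r i * (A i).indicator 1 t = r i * ((A i \ A i₀).indicator 1 t) := by
            by_cases hti : t ∈ A i
            · rw [Set.indicator_of_mem hti, Set.indicator_of_mem (show t ∈ A i \ A i₀ from ⟨hti, ht⟩)]
            · rw [Set.indicator_of_notMem hti,
                Set.indicator_of_notMem (fun hc => hti hc.1)]
          have hmem : i ∈ F.erase i₀ := Finset.mem_erase.mpr ⟨hii, hi⟩
          have h2 : r i * ((A i \ A i₀).indicator 1 t) ≤
              ∑ j ∈ F.erase i₀, r j * (E' j).indicator 1 t :=
            le_trans (le_iSup₂ (f := fun j (_ : j ∈ F.erase i₀) =>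
              r j * ((A j \ A i₀).indicator 1 t)) i hmem)
              (hE'pt t)
          have h3 : ∑ j ∈ F.erase i₀, r j * (E' j).indicator 1 t =
              ∑ j ∈ F.erase i₀, r j * ((if j = i₀ then A i₀ else E' j).indicator 1 t) :=
            Finset.sum_congr rfl fun j hj => by
              rw [if_neg (Finset.mem_erase.mp hj).1]
          rw [h1]
          refine le_trans h2 (le_trans (le_of_eq h3) ?_)
          exact Finset.sum_le_sum_of_subset_of_nonneg (Finset.erase_subset _ _)
            (fun _ _ _ => zero_le)

def maxSet (F : Finset DyadicI) : Finset DyadicI :=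
  F.filter fun K => ∀ K' ∈ F, toSet K ⊆ toSet K' → K' = K

lemma exists_max_containing (F : Finset DyadicI) {I : DyadicI} (hI : I ∈ F) :
    ∃ K ∈ maxSet F, toSet I ⊆ toSet K := by
  classical
  set S := F.filter fun K => toSet I ⊆ toSet K with hS
  have hIS : I ∈ S := Finset.mem_filter.mpr ⟨hI, subset_rfl⟩
  obtain ⟨K, hKS, hmin⟩ := S.exists_min_image (fun K => K.n) ⟨I, hIS⟩
  obtain ⟨hKF, hIK⟩ := Finset.mem_filter.mp hKS
  refine ⟨K, Finset.mem_filter.mpr ⟨hKF, fun K' hK' hsub => ?_⟩, hIK⟩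
  have hK'S : K' ∈ S := Finset.mem_filter.mpr ⟨hK', hIK.trans hsub⟩
  exact eq_of_subset_len_le hsub (len_le_len_of_le (hmin K' hK'S))

lemma maxSet_disjoint {F : Finset DyadicI} {K₁ K₂ : DyadicI}
    (h₁ : K₁ ∈ maxSet F) (h₂ : K₂ ∈ maxSet F) (hne : K₁ ≠ K₂) :
    Disjoint (toSet K₁) (toSet K₂) := by
  obtain ⟨h₁F, h₁M⟩ := Finset.mem_filter.mp h₁
  obtain ⟨h₂F, h₂M⟩ := Finset.mem_filter.mp h₂
  rcases subset_or_subset_or_disjoint K₁ K₂ with h | h | h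
  · exact absurd (h₁M K₂ h₂F h) (Ne.symm hne)
  · exact absurd (h₂M K₁ h₁F h) hne
  · exact h

lemma finite_case (τ : DyadicI → DyadicI) (hτ : Function.Injective τ) (F : Finset DyadicI) :
    (∫⁻ t in Set.Icc (0:ℝ) 1, ⨆ I ∈ F,
      ENNReal.ofReal (len I / len (τ I) * (toSet (τ I)).indicator (fun _ => (1:ℝ)) t)) ≤
      volume (pointSet (↑F : Set DyadicI)) * bmoOpNorm τ ^ 2 := by
  classical
  set r : DyadicI → ℝ := fun I => len I / len (τ I) with hr
  have hr0 : ∀ I, 0 ≤ r I := fun I => div_nonneg (len_pos I).le (len_pos (τ I)).le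
  obtain ⟨E, hEm, hEsub, hEdisj, hEpt⟩ := exists_disjoint_rep
    (fun I => ENNReal.ofReal (r I)) F (fun I => toSet (τ I)) (fun I => measurableSet_toSet _)
  have hconv : ∀ (I : DyadicI) (t : ℝ),
      ENNReal.ofReal (r I * (toSet (τ I)).indicator (fun _ => (1:ℝ)) t)
      = ENNReal.ofReal (r I) * (toSet (τ I)).indicator (1 : ℝ → ℝ≥0∞) t := by
    intro I t
    by_cases ht : t ∈ toSet (τ I) <;>
      simp [Set.indicator_of_mem, Set.indicator_of_notMem, ht]
  set e : DyadicI → ℝ≥0∞ := fun I => volume (E I ∩ Set.Icc (0:ℝ) 1) with he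
  have heT : ∀ I, e I ≠ ∞ := by
    intro I
    refine ne_top_of_le_ne_top ?_ (measure_mono Set.inter_subset_right)
    simp [Real.volume_Icc]
  have hint : (∫⁻ t in Set.Icc (0:ℝ) 1, ⨆ I ∈ F,
      ENNReal.ofReal (r I * (toSet (τ I)).indicator (fun _ => (1:ℝ)) t)) ≤
      ∑ I ∈ F, ENNReal.ofReal (r I) * e I := by
    have h1 : ∀ t : ℝ, (⨆ I ∈ F,
        ENNReal.ofReal (r I * (toSet (τ I)).indicator (fun _ => (1:ℝ)) t))
        ≤ ∑ I ∈ F, ENNReal.ofReal (r I) * (E I).indicator 1 t := by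
      intro t
      calc (⨆ I ∈ F, ENNReal.ofReal (r I * (toSet (τ I)).indicator (fun _ => (1:ℝ)) t))
          = ⨆ I ∈ F, ENNReal.ofReal (r I) * (toSet (τ I)).indicator 1 t :=
            iSup_congr fun I => iSup_congr fun _ => hconv I t
        _ ≤ _ := hEpt t
    calc (∫⁻ t in Set.Icc (0:ℝ) 1, ⨆ I ∈ F,
        ENNReal.ofReal (r I * (toSet (τ I)).indicator (fun _ => (1:ℝ)) t))
        ≤ ∫⁻ t in Set.Icc (0:ℝ) 1, ∑ I ∈ F, ENNReal.ofReal (r I) * (E I).indicator 1 t :=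
          lintegral_mono fun t => h1 t
      _ = ∑ I ∈ F, ∫⁻ t in Set.Icc (0:ℝ) 1, ENNReal.ofReal (r I) * (E I).indicator 1 t :=
          lintegral_finset_sum _ fun I _ => ((measurable_const.indicator (hEm I)).const_mul _)
      _ = ∑ I ∈ F, ENNReal.ofReal (r I) * e I := by
          refine Finset.sum_congr rfl fun I _ => ?_
          have hpt : ∀ t : ℝ, ENNReal.ofReal (r I) * (E I).indicator 1 t
              = (E I).indicator (fun _ => ENNReal.ofReal (r I)) t := by
            intro t; by_cases ht : t ∈ E I <;> simp [ht]
          simp_rw [hpt]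
          rw [lintegral_indicator (hEm I), setLIntegral_const,
            Measure.restrict_apply (hEm I)]
  set c : DyadicI → ℝ := fun I => Real.sqrt ((e I).toReal / len (τ I)) with hc
  have hcsq : ∀ I, c I ^ 2 = (e I).toReal / len (τ I) := fun I =>
    Real.sq_sqrt (div_nonneg ENNReal.toReal_nonneg (len_pos (τ I)).le)
  set a : DyadicI → ℝ := fun J => ∑ I ∈ F, if τ I = J then c I else 0 with ha
  have haτ : ∀ I ∈ F, a (τ I) = c I := by
    intro I hI
    have hcong : ∀ I' ∈ F, (if τ I' = τ I then c I' else 0) = if I' = I then c I' else 0 := by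
      intro I' _; simp [hτ.eq_iff]
    simp only [ha]
    rw [Finset.sum_congr rfl hcong, Finset.sum_ite_eq' F I c, if_pos hI]
  have hbmo1 : bmoSq (F.image τ) a ≤ 1 := by
    rw [bmoSq]
    refine iSup_le fun K => ?_
    refine ENNReal.ofReal_le_one.mpr ?_
    rw [div_le_one (len_pos K)]
    have himg : (F.image τ).filter (fun J => toSet J ⊆ toSet K) =
        (F.filter fun I => toSet (τ I) ⊆ toSet K).image τ := Finset.filter_image
    rw [himg, Finset.sum_image (fun x _ y _ h => hτ h)]
    have step : ∀ I ∈ F.filter (fun I => toSet (τ I) ⊆ toSet K),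
        a (τ I) ^ 2 * len (τ I) = (e I).toReal := by
      intro I hI
      rw [haτ I (Finset.mem_filter.mp hI).1, hcsq I,
        div_mul_cancel₀ _ (len_pos (τ I)).ne']
    rw [Finset.sum_congr rfl step, ← ENNReal.toReal_sum (fun I _ => heT I)]
    have hμ : ∑ I ∈ F.filter (fun I => toSet (τ I) ⊆ toSet K), e I ≤
        ENNReal.ofReal (len K) := by
      rw [← volume_toSet K]
      have hd : (↑(F.filter fun I => toSet (τ I) ⊆ toSet K) : Set DyadicI).PairwiseDisjoint
          (fun I => E I ∩ Set.Icc (0:ℝ) 1) := by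
        intro i hi j hj hij
        exact ((hEdisj i (F.filter_subset _ (Finset.mem_coe.mp hi)) j
          (F.filter_subset _ (Finset.mem_coe.mp hj)) hij).mono
          Set.inter_subset_left Set.inter_subset_left)
      rw [show ∑ I ∈ F.filter (fun I => toSet (τ I) ⊆ toSet K), e I =
          volume (⋃ I ∈ F.filter (fun I => toSet (τ I) ⊆ toSet K), (E I ∩ Set.Icc (0:ℝ) 1))
        from (measure_biUnion_finset hd fun I _ => (hEm I).inter measurableSet_Icc).symm]
      exact measure_mono (Set.iUnion₂_subset fun I hI =>
        Set.inter_subset_left.trans ((hEsub I).trans (Finset.mem_filter.mp hI).2))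
    exact ENNReal.toReal_le_of_le_ofReal (len_pos K).le hμ
  have hsupp : sSigmaSupp τ (F.image τ) = F := by
    have h1 : (F.image τ).filter (fun J => J ∈ Set.range τ) = F.image τ :=
      Finset.filter_true_of_mem fun J hJ => by
        obtain ⟨I, _, rfl⟩ := Finset.mem_image.mp hJ
        exact Set.mem_range_self I
    rw [sSigmaSupp, h1, Finset.image_image,
      show Function.invFun τ ∘ τ = id from funext (Function.leftInverse_invFun hτ),
      Finset.image_id]
  have hcoef : ∀ I ∈ F, sSigmaCoef τ (F.image τ) a I = c I := by
    intro I hI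
    rw [sSigmaCoef]
    simp only [if_pos (Finset.mem_image_of_mem τ hI)]
    exact haτ I hI
  set Z := bmoSq (sSigmaSupp τ (F.image τ)) (sSigmaCoef τ (F.image τ) a) with hZ
  have hZle : Z ≤ bmoOpNorm τ ^ 2 := by
    have h1 : Z ^ (1/2 : ℝ) ≤ bmoOpNorm τ := by
      rw [bmoOpNorm]
      exact le_iSup₂_of_le (F.image τ) a (le_iSup_of_le hbmo1 le_rfl)
    calc Z = (Z ^ (1/2:ℝ)) ^ (2:ℕ) := by
          rw [← ENNReal.rpow_natCast (Z ^ (1/2:ℝ)) 2, ← ENNReal.rpow_mul]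
          norm_num
      _ ≤ (bmoOpNorm τ) ^ (2:ℕ) := pow_le_pow_left' h1 2
  set top : DyadicI → DyadicI := fun I =>
    if h : ∃ K ∈ maxSet F, toSet I ⊆ toSet K then h.choose else I with htop
  have htopM : ∀ I ∈ F, top I ∈ maxSet F ∧ toSet I ⊆ toSet (top I) := by
    intro I hI
    have h : ∃ K ∈ maxSet F, toSet I ⊆ toSet K := exists_max_containing F hI
    simp only [htop, dif_pos h]
    exact ⟨h.choose_spec.1, h.choose_spec.2⟩
  have hvol : volume (pointSet (↑F : Set DyadicI)) = ∑ K ∈ maxSet F, ENNReal.ofReal (len K) := by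
    have hset : pointSet (↑F : Set DyadicI) = ⋃ K ∈ maxSet F, toSet K := by
      apply Set.Subset.antisymm
      · rw [pointSet]
        refine Set.iUnion₂_subset fun I hI => ?_
        have hIF : I ∈ F := Finset.mem_coe.mp hI
        exact ((htopM I hIF).2).trans (Set.subset_iUnion₂ (s := fun K (_ : K ∈ maxSet F) => toSet K) (top I) (htopM I hIF).1)
      · refine Set.iUnion₂_subset fun K hK => ?_
        rw [pointSet]
        exact Set.subset_iUnion₂ (s := fun I (_ : I ∈ (↑F : Set DyadicI)) => toSet I) K
          (Finset.mem_coe.mpr (F.filter_subset _ hK))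
    rw [hset, measure_biUnion_finset (fun K₁ h₁ K₂ h₂ hne =>
        maxSet_disjoint (Finset.mem_coe.mp h₁) (Finset.mem_coe.mp h₂) hne)
      (fun K _ => measurableSet_toSet K)]
    exact Finset.sum_congr rfl fun K _ => volume_toSet K
  have hkey : ENNReal.ofReal (∑ I ∈ F, c I ^ 2 * len I) ≤
      volume (pointSet (↑F : Set DyadicI)) * Z := by
    have hfiber : ∑ I ∈ F, c I ^ 2 * len I =
        ∑ K ∈ maxSet F, ∑ I ∈ F.filter (fun I => top I = K), c I ^ 2 * len I :=
      (Finset.sum_fiberwise_of_maps_to (fun I hI => (htopM I hI).1) _).symm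
    have hKbound : ∀ K ∈ maxSet F,
        ENNReal.ofReal (∑ I ∈ F.filter (fun I => top I = K), c I ^ 2 * len I) ≤
        ENNReal.ofReal (len K) * Z := by
      intro K hK
      have hsub : F.filter (fun I => top I = K) ⊆ F.filter (fun I => toSet I ⊆ toSet K) := by
        intro I hI
        obtain ⟨hIF, hIK⟩ := Finset.mem_filter.mp hI
        exact Finset.mem_filter.mpr ⟨hIF, hIK ▸ (htopM I hIF).2⟩
      have h1 : ∑ I ∈ F.filter (fun I => top I = K), c I ^ 2 * len I ≤
          ∑ I ∈ F.filter (fun I => toSet I ⊆ toSet K), c I ^ 2 * len I :=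
        Finset.sum_le_sum_of_subset_of_nonneg hsub fun I _ _ =>
          mul_nonneg (sq_nonneg _) (len_pos I).le
      have h2 : ENNReal.ofReal
          ((∑ J ∈ (sSigmaSupp τ (F.image τ)).filter (fun J => toSet J ⊆ toSet K),
            (sSigmaCoef τ (F.image τ) a) J ^ 2 * len J) / len K) ≤ Z := by
        rw [hZ, bmoSq]
        exact le_iSup (fun I => ENNReal.ofReal
          ((∑ J ∈ (sSigmaSupp τ (F.image τ)).filter (fun J => toSet J ⊆ toSet I),
            (sSigmaCoef τ (F.image τ) a) J ^ 2 * len J) / len I)) K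
      have h3 : ∑ J ∈ (sSigmaSupp τ (F.image τ)).filter (fun J => toSet J ⊆ toSet K),
            (sSigmaCoef τ (F.image τ) a) J ^ 2 * len J =
          ∑ I ∈ F.filter (fun I => toSet I ⊆ toSet K), c I ^ 2 * len I := by
        rw [hsupp]
        refine Finset.sum_congr rfl fun I hI => ?_
        rw [hcoef I (Finset.mem_filter.mp hI).1]
      calc ENNReal.ofReal (∑ I ∈ F.filter (fun I => top I = K), c I ^ 2 * len I)
          ≤ ENNReal.ofReal (∑ I ∈ F.filter (fun I => toSet I ⊆ toSet K), c I ^ 2 * len I) :=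
            ENNReal.ofReal_le_ofReal h1
        _ = ENNReal.ofReal (len K *
            ((∑ I ∈ F.filter (fun I => toSet I ⊆ toSet K), c I ^ 2 * len I) / len K)) := by
            rw [mul_div_cancel₀ _ (len_pos K).ne']
        _ = ENNReal.ofReal (len K) * ENNReal.ofReal
            ((∑ I ∈ F.filter (fun I => toSet I ⊆ toSet K), c I ^ 2 * len I) / len K) :=
            ENNReal.ofReal_mul (len_pos K).le
        _ ≤ ENNReal.ofReal (len K) * Z := by
            refine mul_le_mul_right ?_ _
            rw [← h3]; exact h2
    calc ENNReal.ofReal (∑ I ∈ F, c I ^ 2 * len I)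
        = ∑ K ∈ maxSet F, ENNReal.ofReal
            (∑ I ∈ F.filter (fun I => top I = K), c I ^ 2 * len I) := by
          rw [hfiber]
          exact ENNReal.ofReal_sum_of_nonneg fun K _ =>
            Finset.sum_nonneg fun I _ => mul_nonneg (sq_nonneg _) (len_pos I).le
      _ ≤ ∑ K ∈ maxSet F, ENNReal.ofReal (len K) * Z := Finset.sum_le_sum hKbound
      _ = (∑ K ∈ maxSet F, ENNReal.ofReal (len K)) * Z := (Finset.sum_mul _ _ _).symm
      _ = volume (pointSet (↑F : Set DyadicI)) * Z := by rw [hvol]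
  have hterm : ∑ I ∈ F, ENNReal.ofReal (r I) * e I =
      ENNReal.ofReal (∑ I ∈ F, c I ^ 2 * len I) := by
    rw [ENNReal.ofReal_sum_of_nonneg (fun I _ => mul_nonneg (sq_nonneg _) (len_pos I).le)]
    refine Finset.sum_congr rfl fun I _ => ?_
    have h1 : c I ^ 2 * len I = r I * (e I).toReal := by
      rw [hcsq I]; simp only [hr]; field_simp
    rw [h1, ENNReal.ofReal_mul (hr0 I), ENNReal.ofReal_toReal (heT I)]
  calc (∫⁻ t in Set.Icc (0:ℝ) 1, ⨆ I ∈ F,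
      ENNReal.ofReal (r I * (toSet (τ I)).indicator (fun _ => (1:ℝ)) t))
      ≤ ∑ I ∈ F, ENNReal.ofReal (r I) * e I := hint
    _ = ENNReal.ofReal (∑ I ∈ F, c I ^ 2 * len I) := hterm
    _ ≤ volume (pointSet (↑F : Set DyadicI)) * Z := hkey
    _ ≤ volume (pointSet (↑F : Set DyadicI)) * bmoOpNorm τ ^ 2 := mul_le_mul_right hZle _

end Statement3Aux

/-- For every injective `τ : D → D` (with inverse `σ = τ⁻¹` on `τ(D)`)
and every nonempty collection `H ⊆ τ(D)` (written as `H = τ(L)` for nonempty `L ⊆ D`,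
so that `μ_H = muSet τ L` and `σ(H)* = L*`), one has
`∫₀¹ μ_H(t) dt ≤ |σ(H)*| · ‖S_σ‖_{BMO}²`; consequently `C₁ ≤ ‖S_σ‖_{BMO}²`. -/
theorem statement3 (τ : DyadicI → DyadicI) (hτ : Function.Injective τ) :
    (∀ L : Set DyadicI, L.Nonempty →
      (∫⁻ t in Set.Icc (0 : ℝ) 1, muSet τ L t) ≤
        volume (pointSet L) * bmoOpNorm τ ^ 2) ∧
    Cone τ ≤ bmoOpNorm τ ^ 2 := by
  classical
  have main : ∀ L : Set DyadicI,
      (∫⁻ t in Set.Icc (0 : ℝ) 1, muSet τ L t) ≤ volume (pointSet L) * bmoOpNorm τ ^ 2 := by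
    intro L
    set g : DyadicI → ℝ → ℝ≥0∞ := fun I t =>
      ENNReal.ofReal (len I / len (τ I) *
        Set.indicator (toSet (τ I)) (fun _ => (1:ℝ)) t) with hg
    have hgm : ∀ I, Measurable (g I) := by
      intro I
      exact ENNReal.measurable_ofReal.comp
        ((measurable_const.indicator measurableSet_Ico).const_mul _)
    set f : {F : Finset DyadicI // ↑F ⊆ L} → ℝ → ℝ≥0∞ :=
      fun F t => ⨆ I ∈ F.1, g I t with hf
    have hfm : ∀ F, Measurable (f F) :=
      fun F => Measurable.iSup fun I => Measurable.iSup fun _ => hgm I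
    have hdir : Directed (· ≤ ·) f := by
      intro F₁ F₂
      refine ⟨⟨F₁.1 ∪ F₂.1, by rw [Finset.coe_union]; exact Set.union_subset F₁.2 F₂.2⟩,
        fun t => iSup₂_le fun I hI => ?_, fun t => iSup₂_le fun I hI => ?_⟩
      · exact le_iSup₂_of_le I (Finset.mem_union_left _ hI) le_rfl
      · exact le_iSup₂_of_le I (Finset.mem_union_right _ hI) le_rfl
    have hpt : ∀ t, muSet τ L t = ⨆ F, f F t := by
      intro t
      apply le_antisymm
      · rw [muSet]
        refine iSup₂_le fun I hI => ?_
        refine le_iSup_of_le ⟨{I}, by simpa using hI⟩ ?_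
        exact le_iSup₂_of_le I (Finset.mem_singleton_self I) le_rfl
      · refine iSup_le fun F => iSup₂_le fun I hI => ?_
        rw [muSet]
        exact le_iSup₂_of_le I (F.2 hI) le_rfl
    calc (∫⁻ t in Set.Icc (0:ℝ) 1, muSet τ L t)
        = ∫⁻ t in Set.Icc (0:ℝ) 1, ⨆ F, f F t := lintegral_congr fun t => hpt t
      _ = ⨆ F, ∫⁻ t in Set.Icc (0:ℝ) 1, f F t :=
          lintegral_iSup_directed (fun F => (hfm F).aemeasurable) hdir
      _ ≤ volume (pointSet L) * bmoOpNorm τ ^ 2 := by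
          refine iSup_le fun F => ?_
          refine le_trans (Statement3Aux.finite_case τ hτ F.1) ?_
          refine mul_le_mul_left (measure_mono ?_) _
          exact Set.iUnion₂_mono' fun I hI => ⟨I, F.2 hI, subset_rfl⟩
  refine ⟨fun L _ => main L, ?_⟩
  rw [Cone]
  refine iSup_le fun L => iSup_le fun _ => ?_
  exact ENNReal.div_le_of_le_mul (by rw [mul_comm]; exact main L)
end
end

section
/- There exists an absolute constant A > 0 such that for every injective map τ : D → D with inverse σ = τ^{−1} : τ(D) → D, one has ‖S_σ‖_{BMO}² ≤ A · C₁. -/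
open MeasureTheory Set
open scoped ENNReal NNReal Classical

noncomputable section

open DyadicI

section Basics
namespace DyadicI

@[ext] lemma ext' {I J : DyadicI} (hn : I.n = J.n) (hk : I.k = J.k) : I = J := by
  cases I; cases J; simp_all

instance : Countable DyadicI := by
  have : Function.Injective (fun I : DyadicI => (I.n, I.k)) := by
    intro I J h; simp at h; exact ext' h.1 h.2
  exact this.countable

lemma len_pos (I : DyadicI) : 0 < I.len := zpow_pos (by norm_num) _

lemma lep_nonneg (I : DyadicI) : 0 ≤ I.lep :=
  mul_nonneg (Nat.cast_nonneg _) (len_pos I).le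

lemma toSet_eq (I : DyadicI) : I.toSet = Set.Ico ((I.k : ℝ) * I.len) (((I.k : ℝ) + 1) * I.len) := by
  simp [toSet, lep]; ring_nf

lemma lep_add_len_le_one (I : DyadicI) : I.lep + I.len ≤ 1 := by
  have hk : (I.k : ℝ) + 1 ≤ 2 ^ I.n := by
    have := I.hk; push_cast; exact_mod_cast Nat.succ_le_of_lt this
  have hlen : I.len = ((2:ℝ) ^ I.n)⁻¹ := by
    simp [len, zpow_neg, zpow_natCast]
  calc I.lep + I.len = ((I.k : ℝ) + 1) * I.len := by simp [lep]; ring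
    _ ≤ (2:ℝ)^I.n * I.len := by
        apply mul_le_mul_of_nonneg_right hk (len_pos I).le
    _ = 1 := by rw [hlen]; field_simp

lemma toSet_subset_Icc (I : DyadicI) : I.toSet ⊆ Set.Icc 0 1 := by
  intro t ht
  rcases ht with ⟨h1, h2⟩
  exact ⟨le_trans (lep_nonneg I) h1, le_trans h2.le (lep_add_len_le_one I)⟩

lemma measurableSet_toSet (I : DyadicI) : MeasurableSet I.toSet := measurableSet_Ico

lemma volume_toSet (I : DyadicI) : volume I.toSet = ENNReal.ofReal I.len := by
  simp [toSet, Real.volume_Ico]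

lemma len_le_of_subset {I J : DyadicI} (h : I.toSet ⊆ J.toSet) : I.len ≤ J.len := by
  have hne : I.lep < I.lep + I.len := by linarith [len_pos I]
  rw [toSet, toSet, Set.Ico_subset_Ico_iff hne] at h
  linarith [h.1, h.2]

lemma toSet_eq_of_subset_of_len_le {I J : DyadicI} (h : I.toSet ⊆ J.toSet)
    (hl : J.len ≤ I.len) : I.toSet = J.toSet := by
  have hne : I.lep < I.lep + I.len := by linarith [len_pos I]
  rw [toSet, toSet, Set.Ico_subset_Ico_iff hne] at h
  have h1 : J.lep = I.lep := by linarith [h.1, h.2]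
  have h2 : I.len = J.len := by linarith [h.1, h.2]
  rw [toSet, toSet, h1, h2]

lemma subset_of_not_disjoint {I J : DyadicI} (hn : J.n ≤ I.n)
    (h : ¬ Disjoint I.toSet J.toSet) : I.toSet ⊆ J.toSet := by
  rcases Set.not_disjoint_iff.mp h with ⟨t, htI, htJ⟩
  rw [toSet_eq] at htI htJ
  rw [toSet_eq I, toSet_eq J]
  obtain ⟨d, hd⟩ : ∃ d : ℕ, I.n = J.n + d := ⟨I.n - J.n, by omega⟩
  have hpow : (2:ℝ) ^ d * I.len = J.len := by
    rw [len, len, hd]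
    rw [← zpow_natCast (2:ℝ) d, ← zpow_add₀ (by norm_num : (2:ℝ) ≠ 0)]
    congr 1; push_cast; ring
  have hIpos := len_pos I
  -- integer inequalities
  have key1 : (J.k : ℝ) * 2 ^ d ≤ I.k := by
    have h1 : (J.k : ℝ) * J.len ≤ t := htJ.1
    have h2 : t < ((I.k : ℝ) + 1) * I.len := htI.2
    have : (J.k : ℝ) * (2 ^ d * I.len) < ((I.k : ℝ) + 1) * I.len := by
      rw [hpow]; linarith
    have hlt : (J.k : ℝ) * 2 ^ d < (I.k : ℝ) + 1 := by
      have := (mul_lt_mul_iff_of_pos_right hIpos).mp (by linarith [this] : (J.k : ℝ) * 2 ^ d * I.len < ((I.k : ℝ) + 1) * I.len)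
      exact this
    have : (J.k * 2 ^ d : ℕ) < I.k + 1 := by exact_mod_cast (by push_cast; linarith : ((J.k * 2 ^ d : ℕ) : ℝ) < ((I.k + 1 : ℕ) : ℝ))
    exact_mod_cast Nat.lt_succ_iff.mp this
  have key2 : ((I.k : ℝ) + 1) ≤ ((J.k : ℝ) + 1) * 2 ^ d := by
    have h1 : (I.k : ℝ) * I.len ≤ t := htI.1
    have h2 : t < ((J.k : ℝ) + 1) * J.len := htJ.2
    have : (I.k : ℝ) * I.len < ((J.k : ℝ) + 1) * (2 ^ d * I.len) := by
      rw [hpow]; linarith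
    have hlt : (I.k : ℝ) < ((J.k : ℝ) + 1) * 2 ^ d := by
      have := (mul_lt_mul_iff_of_pos_right hIpos).mp (by linarith [this] : (I.k : ℝ) * I.len < ((J.k : ℝ) + 1) * 2 ^ d * I.len)
      exact this
    have : (I.k : ℕ) < (J.k + 1) * 2 ^ d := by exact_mod_cast (by push_cast; linarith : ((I.k : ℕ) : ℝ) < (((J.k + 1) * 2 ^ d : ℕ) : ℝ))
    have := Nat.succ_le_of_lt this
    exact_mod_cast (by exact_mod_cast this : ((I.k + 1 : ℕ) : ℝ) ≤ (((J.k + 1) * 2 ^ d : ℕ) : ℝ))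
  intro u hu
  constructor
  · calc (J.k : ℝ) * J.len = (J.k : ℝ) * 2 ^ d * I.len := by rw [← hpow]; ring
      _ ≤ (I.k : ℝ) * I.len := by nlinarith
      _ ≤ u := hu.1
  · calc u < ((I.k : ℝ) + 1) * I.len := hu.2
      _ ≤ ((J.k : ℝ) + 1) * 2 ^ d * I.len := by nlinarith
      _ = ((J.k : ℝ) + 1) * J.len := by rw [← hpow]; ring

lemma trichotomy (I J : DyadicI) :
    I.toSet ⊆ J.toSet ∨ J.toSet ⊆ I.toSet ∨ Disjoint I.toSet J.toSet := by
  rcases le_total J.n I.n with h | h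
  · by_cases hd : Disjoint I.toSet J.toSet
    · exact Or.inr (Or.inr hd)
    · exact Or.inl (subset_of_not_disjoint h hd)
  · by_cases hd : Disjoint I.toSet J.toSet
    · exact Or.inr (Or.inr hd)
    · exact Or.inr (Or.inl (subset_of_not_disjoint h (fun hc => hd hc.symm)))

end DyadicI
end Basics
section Packing
open DyadicI

lemma bmo_sum_le {s : Finset DyadicI} {a : DyadicI → ℝ} (h : bmoSq s a ≤ 1)
    (I₀ : DyadicI) :
    ∑ J ∈ s.filter (fun J => toSet J ⊆ toSet I₀), a J ^ 2 * len J ≤ len I₀ := by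
  unfold bmoSq at h
  have h1 : ENNReal.ofReal
      ((∑ J ∈ s.filter fun J => toSet J ⊆ toSet I₀, a J ^ 2 * len J) / len I₀) ≤ 1 := by
    refine le_trans ?_ h
    exact le_iSup (fun I => ENNReal.ofReal
      ((∑ J ∈ s.filter fun J => toSet J ⊆ toSet I, a J ^ 2 * len J) / len I)) I₀
  rw [ENNReal.ofReal_le_one] at h1
  exact (div_le_one (len_pos I₀)).mp h1

lemma packing {s : Finset DyadicI} {a : DyadicI → ℝ} (h : bmoSq s a ≤ 1)
    (F : Finset DyadicI) :
    F ⊆ s → ∑ J ∈ F, ENNReal.ofReal (a J ^ 2 * len J) ≤ volume (⋃ J ∈ F, toSet J) := by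
  induction F using Finset.strongInduction with
  | _ F ih =>
    intro hFs
    rcases F.eq_empty_or_nonempty with rfl | hne
    · simp
    obtain ⟨J₀, hJ₀F, hmax⟩ := F.exists_max_image len hne
    set F₁ := F.filter (fun J => toSet J ⊆ toSet J₀) with hF₁def
    set F₂ := F.filter (fun J => ¬ toSet J ⊆ toSet J₀) with hF₂def
    have hdisj : ∀ J ∈ F₂, Disjoint (toSet J) (toSet J₀) := by
      intro J hJ
      rw [hF₂def, Finset.mem_filter] at hJ
      rcases trichotomy J J₀ with hc | hc | hc
      · exact absurd hc hJ.2
      · have heq := toSet_eq_of_subset_of_len_le hc (hmax J hJ.1)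
        exact absurd heq.symm.subset hJ.2
      · exact hc
    have hF₂ss : F₂ ⊂ F := by
      refine Finset.ssubset_iff_of_subset (Finset.filter_subset _ _) |>.mpr ?_
      exact ⟨J₀, hJ₀F, by simp [hF₂def]⟩
    have hpart1 : ∑ J ∈ F₁, ENNReal.ofReal (a J ^ 2 * len J) ≤ ENNReal.ofReal (len J₀) := by
      rw [← ENNReal.ofReal_sum_of_nonneg (fun J _ => mul_nonneg (sq_nonneg _) (len_pos J).le)]
      apply ENNReal.ofReal_le_ofReal
      refine le_trans (Finset.sum_le_sum_of_subset_of_nonneg ?_ ?_) (bmo_sum_le h J₀)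
      · exact Finset.filter_subset_filter _ hFs
      · intro J _ _; exact mul_nonneg (sq_nonneg _) (len_pos J).le
    have hpart2 := ih F₂ hF₂ss (le_trans (Finset.filter_subset _ _) hFs)
    have hmeas2 : MeasurableSet (⋃ J ∈ F₂, toSet J) :=
      F₂.measurableSet_biUnion (fun J _ => measurableSet_toSet J)
    have hdisjU : Disjoint (toSet J₀) (⋃ J ∈ F₂, toSet J) := by
      rw [Set.disjoint_iUnion₂_right]
      intro J hJ
      exact (hdisj J hJ).symm
    have hsub : toSet J₀ ∪ (⋃ J ∈ F₂, toSet J) ⊆ ⋃ J ∈ F, toSet J := by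
      apply Set.union_subset
      · exact Set.subset_biUnion_of_mem hJ₀F
      · exact Set.biUnion_mono (fun J hJ => Finset.filter_subset _ _ hJ) (fun J _ => le_rfl)
    calc ∑ J ∈ F, ENNReal.ofReal (a J ^ 2 * len J)
        = ∑ J ∈ F₁, ENNReal.ofReal (a J ^ 2 * len J)
          + ∑ J ∈ F₂, ENNReal.ofReal (a J ^ 2 * len J) :=
          (Finset.sum_filter_add_sum_filter_not F _ _).symm
      _ ≤ ENNReal.ofReal (len J₀) + volume (⋃ J ∈ F₂, toSet J) := add_le_add hpart1 hpart2
      _ = volume (toSet J₀ ∪ ⋃ J ∈ F₂, toSet J) := by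
          rw [measure_union hdisjU hmeas2, volume_toSet]
      _ ≤ volume (⋃ J ∈ F, toSet J) := measure_mono hsub

end Packing
section Mu
open DyadicI

lemma muSet_measurable (τ : DyadicI → DyadicI) (L : Set DyadicI) :
    Measurable (muSet τ L) := by
  unfold muSet
  apply Measurable.iSup; intro I
  apply Measurable.iSup; intro _
  apply Measurable.ennreal_ofReal
  exact measurable_const.mul (measurable_const.indicator (measurableSet_toSet _))

lemma le_muSet {τ : DyadicI → DyadicI} {L : Set DyadicI} {I : DyadicI} (hI : I ∈ L) (t : ℝ) :
    ENNReal.ofReal (len I / len (τ I) * (toSet (τ I)).indicator (fun _ => (1:ℝ)) t)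
      ≤ muSet τ L t := by
  unfold muSet
  exact le_iSup₂ (f := fun (I : DyadicI) (_ : I ∈ L) => ENNReal.ofReal
    (len I / len (τ I) * (toSet (τ I)).indicator (fun _ => (1:ℝ)) t)) I hI

lemma geom_sum_zpow (T : Finset ℤ) (hT : T.Nonempty) :
    ∑ j ∈ T, (2:ℝ)^j ≤ 2 * 2 ^ (T.max' hT) := by
  set M := T.max' hT with hM
  have hle : ∀ j ∈ T, j ≤ M := fun j hj => T.le_max' j hj
  have hinj : ∀ x ∈ T, ∀ y ∈ T, (M - x).toNat = (M - y).toNat → x = y := by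
    intro x hx y hy hxy
    have := hle x hx; have := hle y hy; omega
  have step1 : ∑ j ∈ T, (2:ℝ)^j = 2^(M:ℤ) * ∑ j ∈ T, (1/2:ℝ)^((M - j).toNat) := by
    rw [Finset.mul_sum]
    apply Finset.sum_congr rfl
    intro j hj
    have hj' := hle j hj
    rw [one_div, inv_pow, ← zpow_natCast (2:ℝ) ((M-j).toNat), Int.toNat_of_nonneg (by omega),
      ← zpow_neg, ← zpow_add₀ (by norm_num : (2:ℝ) ≠ 0)]
    congr 1; omega
  have step2 : ∑ j ∈ T, (1/2:ℝ)^((M - j).toNat) ≤ 2 := by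
    rw [← Finset.sum_image hinj]
    set G := T.image (fun j => (M - j).toNat) with hG
    refine le_trans (Finset.sum_le_sum_of_subset_of_nonneg (t := Finset.range (G.sup id + 1))
      ?_ ?_) (sum_geometric_two_le _)
    · intro n hn
      rw [Finset.mem_range]
      exact Nat.lt_succ_of_le (Finset.le_sup (f := id) hn)
    · intro n _ _; positivity
  calc ∑ j ∈ T, (2:ℝ)^j = 2^(M:ℤ) * ∑ j ∈ T, (1/2:ℝ)^((M - j).toNat) := step1
    _ ≤ 2^(M:ℤ) * 2 := by
        apply mul_le_mul_of_nonneg_left step2 (zpow_pos (by norm_num) M).le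
    _ = 2 * 2^M := by ring

lemma mem_sSigmaSupp {τ : DyadicI → DyadicI} (hτ : Function.Injective τ)
    {s : Finset DyadicI} {I : DyadicI} :
    I ∈ sSigmaSupp τ s ↔ τ I ∈ s := by
  unfold sSigmaSupp
  simp only [Finset.mem_image, Finset.mem_filter]
  constructor
  · rintro ⟨J, ⟨hJs, ⟨I₀, rfl⟩⟩, rfl⟩
    rwa [Function.leftInverse_invFun hτ I₀]
  · intro h
    exact ⟨τ I, ⟨h, ⟨I, rfl⟩⟩, Function.leftInverse_invFun hτ I⟩

end Mu
section Key
open DyadicI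

lemma key_estimate (τ : DyadicI → DyadicI) (hτ : Function.Injective τ)
    (s : Finset DyadicI) (a : DyadicI → ℝ) (hbmo : bmoSq s a ≤ 1) (K : DyadicI) :
    ENNReal.ofReal ((∑ J ∈ (sSigmaSupp τ s).filter (fun J => toSet J ⊆ toSet K),
      sSigmaCoef τ s a J ^ 2 * len J) / len K) ≤ ENNReal.ofReal 2 * Cone τ := by
  set L := (sSigmaSupp τ s).filter (fun J => toSet J ⊆ toSet K) with hLdef
  have hLs : ∀ I ∈ L, τ I ∈ s := fun I hI =>
    (mem_sSigmaSupp hτ).mp (Finset.mem_filter.mp hI).1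
  have hLK : ∀ I ∈ L, toSet I ⊆ toSet K := fun I hI => (Finset.mem_filter.mp hI).2
  have hsum : ∑ J ∈ L, sSigmaCoef τ s a J ^ 2 * len J = ∑ I ∈ L, a (τ I) ^ 2 * len I := by
    refine Finset.sum_congr rfl (fun I hI => ?_)
    unfold sSigmaCoef
    rw [if_pos (hLs I hI)]
  rcases L.eq_empty_or_nonempty with hLe | hne
  · rw [hLe]
    simp
  set μ := muSet τ (↑L : Set DyadicI) with hμdef
  have hμmeas : Measurable μ := muSet_measurable τ _
  -- the Cone bound
  have hvolpos : volume (pointSet (↑L : Set DyadicI)) ≠ 0 := by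
    obtain ⟨I, hI⟩ := hne
    have hsub : toSet I ⊆ pointSet (↑L : Set DyadicI) := by
      intro t ht
      exact Set.mem_biUnion (by exact_mod_cast hI) ht
    have : volume (toSet I) ≤ volume (pointSet (↑L : Set DyadicI)) := measure_mono hsub
    rw [volume_toSet] at this
    intro hc
    rw [hc] at this
    simp only [le_zero_iff, ENNReal.ofReal_eq_zero] at this
    exact absurd this (not_le.mpr (len_pos I))
  have hvolK : volume (pointSet (↑L : Set DyadicI)) ≤ ENNReal.ofReal (len K) := by
    rw [← volume_toSet]
    apply measure_mono
    intro t ht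
    rcases Set.mem_iUnion₂.mp ht with ⟨I, hI, htI⟩
    exact hLK I (by exact_mod_cast hI) htI
  have hvoltop : volume (pointSet (↑L : Set DyadicI)) ≠ ⊤ :=
    (lt_of_le_of_lt hvolK ENNReal.ofReal_lt_top).ne
  have hConeL : (∫⁻ t in Set.Icc (0:ℝ) 1, μ t) / volume (pointSet (↑L : Set DyadicI))
      ≤ Cone τ := by
    unfold Cone
    exact le_iSup₂ (f := fun (L' : Set DyadicI) (_ : L'.Nonempty) =>
      (∫⁻ t in Set.Icc (0:ℝ) 1, muSet τ L' t) / volume (pointSet L'))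
      (↑L : Set DyadicI) (Finset.coe_nonempty.mpr hne)
  have hint : ∫⁻ t in Set.Icc (0:ℝ) 1, μ t ≤ Cone τ * volume (pointSet (↑L : Set DyadicI)) :=
    (ENNReal.div_le_iff hvolpos hvoltop).mp hConeL
  -- level decomposition
  set m : DyadicI → ℤ := fun I => ((τ I).n : ℤ) - I.n with hmdef
  have hlen_split : ∀ I, len I = (2:ℝ) ^ (m I) * len (τ I) := by
    intro I
    rw [len, len, ← zpow_add₀ (by norm_num : (2:ℝ) ≠ 0)]
    congr 1
    simp [hmdef]
    ring
  have hw : ∀ I, len I / len (τ I) = (2:ℝ) ^ (m I) := by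
    intro I
    rw [hlen_split I, mul_div_assoc, div_self (len_pos (τ I)).ne', mul_one]
  set M := L.image m with hMdef
  set Ω : ℤ → Set ℝ := fun j => {t | ENNReal.ofReal ((2:ℝ) ^ j) ≤ μ t} with hΩdef
  have hΩmeas : ∀ j, MeasurableSet (Ω j) :=
    fun j => measurableSet_le measurable_const hμmeas
  have hEsub : ∀ (j : ℤ), ∀ I ∈ L, m I = j → toSet (τ I) ⊆ Ω j ∩ Set.Icc 0 1 := by
    intro j I hI hmI t ht
    refine ⟨?_, toSet_subset_Icc _ ht⟩
    have hmu := le_muSet (τ := τ) (L := (↑L : Set DyadicI)) (I := I)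
      (by exact_mod_cast hI) t
    rw [Set.indicator_of_mem ht, mul_one, hw I, hmI] at hmu
    exact hmu
  -- pointwise layer bound
  have hptwise : ∀ t, (∑ j ∈ M, (Ω j).indicator (fun _ => ENNReal.ofReal ((2:ℝ) ^ j)) t)
      ≤ ENNReal.ofReal 2 * μ t := by
    intro t
    have hrw : ∀ j ∈ M, (Ω j).indicator (fun _ => ENNReal.ofReal ((2:ℝ) ^ j)) t
        = if t ∈ Ω j then ENNReal.ofReal ((2:ℝ) ^ j) else 0 :=
      fun j _ => Set.indicator_apply _ _ _
    rw [Finset.sum_congr rfl hrw, ← Finset.sum_filter]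
    set T := M.filter (fun j => t ∈ Ω j) with hTdef
    rcases T.eq_empty_or_nonempty with hTe | hTne
    · rw [hTe]; simp
    have hmax : t ∈ Ω (T.max' hTne) := (Finset.mem_filter.mp (T.max'_mem hTne)).2
    have hmax' : ENNReal.ofReal ((2:ℝ) ^ (T.max' hTne)) ≤ μ t := hmax
    calc ∑ j ∈ T, ENNReal.ofReal ((2:ℝ) ^ j)
        = ENNReal.ofReal (∑ j ∈ T, (2:ℝ) ^ j) :=
          (ENNReal.ofReal_sum_of_nonneg (fun j _ => (zpow_pos (by norm_num) j).le)).symm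
      _ ≤ ENNReal.ofReal (2 * 2 ^ (T.max' hTne)) :=
          ENNReal.ofReal_le_ofReal (geom_sum_zpow T hTne)
      _ = ENNReal.ofReal 2 * ENNReal.ofReal ((2:ℝ) ^ (T.max' hTne)) :=
          ENNReal.ofReal_mul (by norm_num)
      _ ≤ ENNReal.ofReal 2 * μ t := mul_le_mul_right hmax' _
  -- per level estimate
  have hlevel : ∀ j ∈ M, ∑ I ∈ L.filter (fun I => m I = j), ENNReal.ofReal (a (τ I) ^ 2 * len I)
      ≤ ENNReal.ofReal ((2:ℝ) ^ j) * volume (Ω j ∩ Set.Icc 0 1) := by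
    intro j _
    set Lj := L.filter (fun I => m I = j) with hLjdef
    have h1 : ∀ I ∈ Lj, ENNReal.ofReal (a (τ I) ^ 2 * len I)
        = ENNReal.ofReal ((2:ℝ) ^ j) * ENNReal.ofReal (a (τ I) ^ 2 * len (τ I)) := by
      intro I hI
      have hmI : m I = j := (Finset.mem_filter.mp hI).2
      rw [← ENNReal.ofReal_mul (zpow_pos (by norm_num : (0:ℝ) < 2) j).le]
      congr 1
      rw [hlen_split I, hmI]
      ring
    rw [Finset.sum_congr rfl h1, ← Finset.mul_sum]
    apply mul_le_mul_right
    have h2 : ∑ I ∈ Lj, ENNReal.ofReal (a (τ I) ^ 2 * len (τ I))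
        = ∑ J ∈ Lj.image τ, ENNReal.ofReal (a J ^ 2 * len J) :=
      (Finset.sum_image (f := fun J => ENNReal.ofReal (a J ^ 2 * len J)) (s := Lj)
        (g := τ) (fun x _ y _ h => hτ h)).symm
    rw [h2]
    refine le_trans (packing hbmo _ ?_) (measure_mono ?_)
    · intro J hJ
      rcases Finset.mem_image.mp hJ with ⟨I, hI, rfl⟩
      exact hLs I (Finset.filter_subset _ _ hI)
    · intro t ht
      rcases Set.mem_iUnion₂.mp ht with ⟨J, hJ, htJ⟩
      rcases Finset.mem_image.mp hJ with ⟨I, hI, rfl⟩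
      exact hEsub j I (Finset.filter_subset _ _ hI) (Finset.mem_filter.mp hI).2 htJ
  -- main chain
  have main : ENNReal.ofReal (∑ I ∈ L, a (τ I) ^ 2 * len I)
      ≤ ENNReal.ofReal 2 * Cone τ * ENNReal.ofReal (len K) := by
    calc ENNReal.ofReal (∑ I ∈ L, a (τ I) ^ 2 * len I)
        = ∑ I ∈ L, ENNReal.ofReal (a (τ I) ^ 2 * len I) :=
          ENNReal.ofReal_sum_of_nonneg (fun I _ => mul_nonneg (sq_nonneg _) (len_pos I).le)
      _ = ∑ j ∈ M, ∑ I ∈ L.filter (fun I => m I = j), ENNReal.ofReal (a (τ I) ^ 2 * len I) :=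
          (Finset.sum_fiberwise_of_maps_to (fun I hI => Finset.mem_image_of_mem m hI) _).symm
      _ ≤ ∑ j ∈ M, ENNReal.ofReal ((2:ℝ) ^ j) * volume (Ω j ∩ Set.Icc 0 1) :=
          Finset.sum_le_sum hlevel
      _ = ∑ j ∈ M, ∫⁻ t in Set.Icc (0:ℝ) 1,
            (Ω j).indicator (fun _ => ENNReal.ofReal ((2:ℝ) ^ j)) t := by
          refine Finset.sum_congr rfl (fun j _ => ?_)
          rw [lintegral_indicator_const (hΩmeas j), Measure.restrict_apply (hΩmeas j)]
      _ = ∫⁻ t in Set.Icc (0:ℝ) 1,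
            ∑ j ∈ M, (Ω j).indicator (fun _ => ENNReal.ofReal ((2:ℝ) ^ j)) t :=
          (lintegral_finset_sum M
            (fun j _ => measurable_const.indicator (hΩmeas j))).symm
      _ ≤ ∫⁻ t in Set.Icc (0:ℝ) 1, ENNReal.ofReal 2 * μ t := lintegral_mono hptwise
      _ = ENNReal.ofReal 2 * ∫⁻ t in Set.Icc (0:ℝ) 1, μ t :=
          lintegral_const_mul _ hμmeas
      _ ≤ ENNReal.ofReal 2 * (Cone τ * volume (pointSet (↑L : Set DyadicI))) :=
          mul_le_mul_right hint _
      _ ≤ ENNReal.ofReal 2 * Cone τ * ENNReal.ofReal (len K) := by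
          rw [mul_assoc]
          exact mul_le_mul_right (mul_le_mul_right hvolK _) _
  -- conclude
  rw [hsum, ENNReal.ofReal_div_of_pos (len_pos K)]
  refine le_trans (ENNReal.div_le_div_right main _) ?_
  rw [mul_div_assoc, ENNReal.div_self (by simp [len_pos K] : ENNReal.ofReal (len K) ≠ 0)
    ENNReal.ofReal_ne_top, mul_one]

end Key

/-- There is an absolute constant `A > 0` such that for every
injective `τ : D → D` (with inverse `σ = τ⁻¹` on `τ(D)`), `‖S_σ‖_{BMO}² ≤ A · C₁`. -/
theorem statement4 :
    ∃ A : ℝ, 0 < A ∧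
      ∀ (τ : DyadicI → DyadicI), Function.Injective τ →
        bmoOpNorm τ ^ 2 ≤ ENNReal.ofReal A * Cone τ := by
  refine ⟨2, by norm_num, fun τ hτ => ?_⟩
  have hterm : ∀ (s : Finset DyadicI) (a : DyadicI → ℝ), bmoSq s a ≤ 1 →
      bmoSq (sSigmaSupp τ s) (sSigmaCoef τ s a) ≤ ENNReal.ofReal 2 * Cone τ := by
    intro s a h
    unfold bmoSq
    exact iSup_le fun K => key_estimate τ hτ s a h K
  have hnorm : bmoOpNorm τ ≤ (ENNReal.ofReal 2 * Cone τ) ^ (1/2 : ℝ) := by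
    unfold bmoOpNorm
    refine iSup_le fun s => iSup_le fun a => iSup_le fun h => ?_
    exact ENNReal.rpow_le_rpow (hterm s a h) (by norm_num)
  calc bmoOpNorm τ ^ 2 ≤ ((ENNReal.ofReal 2 * Cone τ) ^ (1/2 : ℝ)) ^ 2 :=
        pow_le_pow_left' hnorm 2
    _ = ENNReal.ofReal 2 * Cone τ := by
        rw [← ENNReal.rpow_natCast ((ENNReal.ofReal 2 * Cone τ) ^ (1/2 : ℝ)) 2,
          ← ENNReal.rpow_mul]
        norm_num
end
end
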